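/- For any edge {i,j} with j interior, the difference of the min-sum messages satisfies the sign recursion: m^n_{j→i} = sign(Σ_{k∈∂j\{i}} m^{n-1}_{k→j}), where m^n_{j→i} := M^n_{j→i}(-1) - M^n_{j→i}(1), M denotes the min-sum BP messages with binary states {-1,+1} and Ising potential I(x_i ≠ x_j), and sign(0)=0. -/
import Mathlib


/-- Min-sum BP messages `M` on a graph `G` with interior `B` and boundary
configuration `x` satisfy: the difference messages
`m^n_{j→i} := M^n_{j→i}(-1) - M^n_{j→i}(1)` obey the sign recursion
`m^n_{j→i} = sign (Σ_{k ∈ ∂j \ {i}} m^{n-1}_{k→j})` for interior senders `j`. -/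
theorem difference_message_recursion
    {V : Type*} [Fintype V] [DecidableEq V]
    (G : SimpleGraph V) [DecidableRel G.Adj]
    (B : Finset V) (x : V → ℤ)
    (M : ℕ → V → V → ℤ → ℤ)
    -- boundary condition: for j ∉ B, M^n_{j→i}(s) = 1 if x_j ≠ s, else 0
    (hbd : ∀ j, j ∉ B → ∀ i, ∀ n : ℕ, ∀ s : ℤ,
      M n j i s = if x j ≠ s then 1 else 0)
    -- initialization: for j ∈ B, M^0_{j→i}(s) = 0
    (h0 : ∀ j ∈ B, ∀ i, ∀ s : ℤ, M 0 j i s = 0)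
    -- update: for j ∈ B and n > 0,
    -- M^n_{j→i}(s) = min_{z ∈ {±1}} [ I(s ≠ z) + Σ_{k ∈ ∂j\{i}} M^{n-1}_{k→j}(z) ]
    (hup : ∀ j ∈ B, ∀ i, ∀ n : ℕ, 0 < n → ∀ s : ℤ,
      M n j i s =
        min ((if s ≠ 1 then 1 else 0) + ∑ k ∈ G.neighborFinset j \ {i}, M (n-1) k j 1)
            ((if s ≠ -1 then 1 else 0) + ∑ k ∈ G.neighborFinset j \ {i}, M (n-1) k j (-1))) :
    ∀ j ∈ B, ∀ i, G.Adj j i → ∀ n : ℕ, 0 < n →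
      M n j i (-1) - M n j i 1 =
        Int.sign (∑ k ∈ G.neighborFinset j \ {i}, (M (n-1) k j (-1) - M (n-1) k j 1)) := by
  intro j hj i _ n hn
  rw [hup j hj i n hn (-1), hup j hj i n hn 1]
  set S1 := ∑ k ∈ G.neighborFinset j \ {i}, M (n-1) k j 1 with hS1
  set Sm := ∑ k ∈ G.neighborFinset j \ {i}, M (n-1) k j (-1) with hSm
  have hsum : ∑ k ∈ G.neighborFinset j \ {i}, (M (n-1) k j (-1) - M (n-1) k j 1)
      = Sm - S1 := by
    rw [Finset.sum_sub_distrib]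
  rw [hsum]
  norm_num
  rcases lt_trichotomy (Sm - S1) 0 with h | h | h
  · rw [Int.sign_eq_neg_one_iff_neg.mpr (by omega : Sm - S1 < 0)]
    omega
  · rw [(by omega : Sm - S1 = 0), Int.sign_zero]
    omega
  · rw [Int.sign_eq_one_iff_pos.mpr (by omega : 0 < Sm - S1)]
    omega
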